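/- arXiv:1411.6973 — 3 statements merged into one kernel-verified Lean document; each statement's English description precedes it below -/
import Mathlib

section
/- Let α, β, κ, g, ι, G > 0 with β = 3k/α for some k > 0. If (16/81)(α − κg)³ ≥ k κ² (ι + r^oc·G)², where r^oc = √(4α/(3k)), then there exists χ > 0 such that (αβ/4)χ³ − (α − κg)χ + κ(ι + r^oc·G) ≤ 0; moreover the choice χ = √((4/(9k))(α − κg)) works. -/
theorem invariance_cubic_condition
    (α β κ g ι G k : ℝ)
    (hα : 0 < α) (hβ : 0 < β) (hκ : 0 < κ) (hg : 0 < g) (hι : 0 < ι) (hG : 0 < G)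
    (hk : 0 < k) (hβk : β = 3 * k / α)
    (hcond : (16 / 81) * (α - κ * g) ^ 3 ≥
      k * κ ^ 2 * (ι + Real.sqrt (4 * α / (3 * k)) * G) ^ 2) :
    (∃ χ : ℝ, 0 < χ ∧
      (α * β / 4) * χ ^ 3 - (α - κ * g) * χ +
        κ * (ι + Real.sqrt (4 * α / (3 * k)) * G) ≤ 0) ∧
    (0 < Real.sqrt ((4 / (9 * k)) * (α - κ * g)) ∧
      (α * β / 4) * (Real.sqrt ((4 / (9 * k)) * (α - κ * g))) ^ 3 -
        (α - κ * g) * Real.sqrt ((4 / (9 * k)) * (α - κ * g)) +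
        κ * (ι + Real.sqrt (4 * α / (3 * k)) * G) ≤ 0) := by
  set A := α - κ * g with hA
  set M := ι + Real.sqrt (4 * α / (3 * k)) * G with hMdef
  clear_value A M
  have hM : 0 < M := by
    have := Real.sqrt_nonneg (4 * α / (3 * k))
    have : 0 ≤ Real.sqrt (4 * α / (3 * k)) * G := by positivity
    simp only [hMdef]; linarith
  have hA3 : 0 < A ^ 3 := by
    have hpos : 0 < k * κ ^ 2 * M ^ 2 := by positivity
    linarith
  have hApos : 0 < A := by
    by_contra h
    push_neg at h
    nlinarith [mul_nonneg (neg_nonneg.mpr h) (sq_nonneg A)]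
  have harg : 0 < (4 / (9 * k)) * A := by positivity
  set χ := Real.sqrt ((4 / (9 * k)) * A) with hχdef
  have hχ : 0 < χ := Real.sqrt_pos.mpr harg
  have hχsq : χ ^ 2 = (4 / (9 * k)) * A := Real.sq_sqrt harg.le
  have hαβ : α * β / 4 = 3 * k / 4 := by
    rw [hβk]; field_simp
  have e1 : k * χ ^ 2 = 4 / 9 * A := by
    rw [hχsq]; field_simp
  have e2 : k * ((2 / 3) * A * χ) ^ 2 = 16 / 81 * A ^ 3 := by
    linear_combination (4 / 9 * A ^ 2) * e1
  have hkey : κ * M ≤ (2 / 3) * A * χ := by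
    by_contra h
    push_neg at h
    have hnn : (0 : ℝ) ≤ (2 / 3) * A * χ := by positivity
    have h2 : ((2 / 3) * A * χ) ^ 2 < (κ * M) ^ 2 :=
      pow_lt_pow_left₀ h hnn (by norm_num)
    nlinarith [e2, hcond, mul_lt_mul_of_pos_left h2 hk]
  have hval : (α * β / 4) * χ ^ 3 - A * χ + κ * M ≤ 0 := by
    have e3 : k * χ ^ 3 = 4 / 9 * A * χ := by linear_combination χ * e1
    rw [hαβ]
    linarith [hkey, e3]
  exact ⟨⟨χ, hχ, hval⟩, hχ, hval⟩
end

section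
/- Let the quartic q(r) = (αβ/8)r⁴ − (α/2)r² + κP with α, β, κ > 0 and 0 < κP < α/(2β). At the high-voltage positive root r_eq of q, the derivative of power with respect to amplitude satisfies κ·dP/dr |_{r=r_eq} = α(r_eq − (β/2)r_eq³) < 0. -/
theorem power_amplitude_sensitivity_negative_at_high_voltage_root
    (α β κ P : ℝ) (hα : 0 < α) (hβ : 0 < β) (hκ : 0 < κ)
    (hP : 0 < κ * P) (hload : κ * P < α / (2 * β)) :
    let k := α * β / 3
    let r_eq := Real.sqrt ((2 * α + 2 * Real.sqrt (α ^ 2 - 6 * k * (κ * P))) / (3 * k))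
    HasDerivAt (fun r : ℝ => (α / 2) * r ^ 2 - (α * β / 8) * r ^ 4)
        (α * (r_eq - (β / 2) * r_eq ^ 3)) r_eq ∧
    α * (r_eq - (β / 2) * r_eq ^ 3) < 0 := by
  intro k r_eq
  have hk : k = α * β / 3 := rfl
  have hD : (0:ℝ) < α ^ 2 - 6 * k * (κ * P) := by
    have h2 : κ * P * (2 * β) < α := (lt_div_iff₀ (by positivity)).mp hload
    simp only [hk]
    nlinarith [hα.le, hβ.le]
  have hsD : 0 < Real.sqrt (α ^ 2 - 6 * k * (κ * P)) := Real.sqrt_pos.mpr hD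
  have hX : (0:ℝ) < (2 * α + 2 * Real.sqrt (α ^ 2 - 6 * k * (κ * P))) / (3 * k) := by
    apply div_pos (by linarith) (by rw [hk]; positivity)
  have hr : 0 < r_eq := Real.sqrt_pos.mpr hX
  have hrsq : r_eq ^ 2 = (2 * α + 2 * Real.sqrt (α ^ 2 - 6 * k * (κ * P))) / (3 * k) :=
    Real.sq_sqrt hX.le
  have hgt : 2 / β < r_eq ^ 2 := by
    rw [hrsq, hk, div_lt_div_iff₀ hβ (by positivity)]
    nlinarith [mul_pos hsD hβ]
  constructor
  · have h := ((hasDerivAt_pow 2 r_eq).const_mul (α / 2)).sub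
      ((hasDerivAt_pow 4 r_eq).const_mul (α * β / 8))
    refine h.congr_deriv ?_
    ring
  · have h1 : 1 - (β / 2) * r_eq ^ 2 < 0 := by
      have h2 : 2 < r_eq ^ 2 * β := (div_lt_iff₀ hβ).mp hgt
      nlinarith
    have : r_eq - (β / 2) * r_eq ^ 3 = r_eq * (1 - (β / 2) * r_eq ^ 2) := by ring
    rw [this]
    have := mul_pos hα (mul_pos hr (neg_pos.mpr h1))
    nlinarith
end

section
/- Consider the scalar averaged amplitude dynamics dr/dt = (α/(2C))(r − (β/4)r³) − κP/(Cr) on r > 0, with α, β, C, κ > 0 and 0 < κP < α/(2β). The high-voltage equilibrium r_eq (the larger positive root of (αβ/8)r⁴ − (α/2)r² + κP = 0) is locally exponentially stable: the linearization has eigenvalue (α/(2C))(1 − (3β/4)r_eq²) + κP/(Cr_eq²) < 0. -/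
theorem high_voltage_equilibrium_locally_exp_stable
    (α β C κ P : ℝ) (hα : 0 < α) (hβ : 0 < β) (hC : 0 < C) (hκ : 0 < κ)
    (hP : 0 < κ * P) (hload : κ * P < α / (2 * β)) :
    let k := α * β / 3
    let r_eq := Real.sqrt ((2 * α + 2 * Real.sqrt (α ^ 2 - 6 * k * (κ * P))) / (3 * k))
    let lam := (α / (2 * C)) * (1 - (3 * β / 4) * r_eq ^ 2) + κ * P / (C * r_eq ^ 2)
    ((α / (2 * C)) * (r_eq - (β / 4) * r_eq ^ 3) - κ * P / (C * r_eq) = 0) ∧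
    HasDerivAt (fun r : ℝ => (α / (2 * C)) * (r - (β / 4) * r ^ 3) - κ * P / (C * r))
      lam r_eq ∧
    lam < 0 := by
  intro k r_eq lam
  have hk : 6 * k * (κ * P) = 2 * α * β * (κ * P) := by simp only [k]; ring
  have h2b : κ * P * (2 * β) < α := (lt_div_iff₀ (by positivity)).mp hload
  have hD : 0 < α ^ 2 - 6 * k * (κ * P) := by rw [hk]; nlinarith
  set s := Real.sqrt (α ^ 2 - 6 * k * (κ * P)) with hs_def
  have hs_pos : 0 < s := Real.sqrt_pos.mpr hD
  have hs2 : s ^ 2 = α ^ 2 - 2 * α * β * (κ * P) := by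
    rw [hs_def, Real.sq_sqrt hD.le, hk]
  have hs_lt : s < α := by
    have hlt : s ^ 2 < α ^ 2 := by nlinarith [mul_pos hα hβ]
    exact lt_of_pow_lt_pow_left₀ 2 hα.le hlt
  have h3k : 3 * k = α * β := by simp only [k]; ring
  have hxpos : 0 < (2 * α + 2 * s) / (3 * k) := by rw [h3k]; positivity
  have hr_pos : 0 < r_eq := Real.sqrt_pos.mpr hxpos
  have hx : r_eq ^ 2 = (2 * α + 2 * s) / (α * β) := by
    show Real.sqrt _ ^ 2 = _
    rw [Real.sq_sqrt hxpos.le, h3k]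
  have hr_ne : r_eq ≠ 0 := ne_of_gt hr_pos
  have hC_ne : C ≠ 0 := ne_of_gt hC
  have hx' : α * β * r_eq ^ 2 = 2 * α + 2 * s := by
    field_simp at hx; linarith [hx]
  have hab : (0:ℝ) < α * β := mul_pos hα hβ
  -- key algebraic identity: α (4 r² - β r⁴) = 8 κ P
  have hkey0 : α * β * (α * (4 * r_eq ^ 2 - β * r_eq ^ 4) - 8 * (κ * P)) = 0 := by
    linear_combination (2 * α - α * β * r_eq ^ 2 - 2 * s) * hx' - 4 * hs2
  have hkey : α * (4 * r_eq ^ 2 - β * r_eq ^ 4) = 8 * (κ * P) := by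
    rcases mul_eq_zero.mp hkey0 with h | h
    · exact absurd h (ne_of_gt hab)
    · linarith
  -- equilibrium
  have heq : (α / (2 * C)) * (r_eq - (β / 4) * r_eq ^ 3) - κ * P / (C * r_eq) = 0 := by
    field_simp
    linear_combination hkey
  refine ⟨heq, ?_, ?_⟩
  · have h1 : HasDerivAt (fun r : ℝ => (α / (2 * C)) * (r - (β / 4) * r ^ 3))
        ((α / (2 * C)) * (1 - (β / 4) * (3 * r_eq ^ 2))) r_eq := by
      have := ((hasDerivAt_id r_eq).sub ((hasDerivAt_pow 3 r_eq).const_mul (β / 4))).const_mul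
        (α / (2 * C))
      exact this.congr_deriv (by norm_num)
    have h2 : HasDerivAt (fun r : ℝ => κ * P / (C * r))
        ((0 * (C * r_eq) - κ * P * (C * 1)) / (C * r_eq) ^ 2) r_eq :=
      (hasDerivAt_const r_eq (κ * P)).div ((hasDerivAt_id r_eq).const_mul C) (by positivity)
    have h3 := h1.sub h2
    have hd : (α / (2 * C)) * (1 - (β / 4) * (3 * r_eq ^ 2)) -
        (0 * (C * r_eq) - κ * P * (C * 1)) / (C * r_eq) ^ 2 = lam := by
      show _ = (α / (2 * C)) * (1 - (3 * β / 4) * r_eq ^ 2) + κ * P / (C * r_eq ^ 2)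
      field_simp
      ring
    rw [← hd]
    exact h3
  · have hterm : κ * P / (C * r_eq ^ 2) = α * (4 - β * r_eq ^ 2) / (8 * C) := by
      rw [div_eq_div_iff (by positivity) (by positivity)]
      linear_combination (-C) * hkey
    have hlam : lam = -s / C := by
      show (α / (2 * C)) * (1 - (3 * β / 4) * r_eq ^ 2) + κ * P / (C * r_eq ^ 2) = -s / C
      rw [hterm]
      field_simp
      linear_combination (-32) * hx'
    rw [hlam]
    exact div_neg_of_neg_of_pos (by linarith) hC
end
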